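/- Let C₃ = ⟨ω⟩ be the cyclic group of order 3 and let ℤ[C₃] be its integral group ring, with [ω^k] denoting the image of ω^k in ℤ[C₃]. Then in the power series ring ℤ[C₃]⟦t⟧, (1 − t)(1 − [ω]t)(1 − [ω²]t) · ∑_{n ≥ 0} ( ∑_{0 ≤ i ≤ n, 0 ≤ j ≤ n} [ω^{i+j}] ) t^n = 1 + [ω]t. (This is the φ-Ehrhart series of the unit square [0,1]² for the homomorphism φ : ℤ² → C₃ sending both standard basis vectors to ω.) -/

import Mathlib

def ω : Multiplicative (ZMod 3) := Multiplicative.ofAdd 1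

namespace EhrhartAux

abbrev A := MonoidAlgebra ℤ (Multiplicative (ZMod 3))

noncomputable def w : A := MonoidAlgebra.of ℤ (Multiplicative (ZMod 3)) ω

noncomputable def b (n : ℕ) : A := ∑ i ∈ Finset.range (n+1), w ^ i

noncomputable def a (n : ℕ) : A :=
  ∑ i ∈ Finset.range (n + 1), ∑ j ∈ Finset.range (n + 1),
    MonoidAlgebra.of ℤ (Multiplicative (ZMod 3)) (ω ^ (i + j))

lemma w3 : w ^ 3 = 1 := by
  rw [w, ← map_pow]
  have : ω ^ 3 = 1 := by decide
  rw [this, map_one]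

noncomputable def s : A := 1 + w + w ^ 2

lemma wks (k : ℕ) : w ^ k * s = s := by
  induction k with
  | zero => simp
  | succ k ih =>
    have hw : w * s = s := by rw [s]; linear_combination w3
    rw [pow_succ, mul_assoc, hw, ih]

lemma ss : s * s = 3 * s := by
  have h1 := wks 1
  have h2 := wks 2
  rw [s] at *
  linear_combination h1 + h2

lemma sb (n : ℕ) : s * b n = ((n : A) + 1) * s := by
  rw [b, Finset.mul_sum]
  have : ∀ i ∈ Finset.range (n+1), s * w ^ i = s := by
    intro i _; rw [mul_comm, wks]
  rw [Finset.sum_congr rfl this, Finset.sum_const, Finset.card_range,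
    nsmul_eq_mul]
  push_cast
  ring

lemma a_eq (n : ℕ) : a n = b n ^ 2 := by
  rw [a, b, sq, Finset.sum_mul_sum]
  refine Finset.sum_congr rfl fun i _ => Finset.sum_congr rfl fun j _ => ?_
  rw [← pow_add, w, ← map_pow]

lemma sa (n : ℕ) : s * a n = ((n : A) + 1) ^ 2 * s := by
  rw [a_eq, sq (b n), ← mul_assoc, sb, mul_assoc, sb]
  ring

lemma b_rec (n : ℕ) : b (n + 3) = b n + s := by
  rw [b, b, show n + 3 + 1 = (n+1) + 1 + 1 + 1 from rfl,
    Finset.sum_range_succ, Finset.sum_range_succ, Finset.sum_range_succ, s]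
  have h := wks (n + 1)
  rw [s] at h
  linear_combination h

lemma a_rec (n : ℕ) : a (n + 3) = a n + (2 * (n : A) + 5) * s := by
  have h1 := a_eq (n + 3)
  have h2 := a_eq n
  have h3 := b_rec n
  have h4 := sb n
  have h5 := ss
  push_cast at *
  linear_combination h1 - h2 + (b (n+3) + b n + s) * h3 + 2 * h4 + h5

lemma key (n : ℕ) :
    a (n + 3) - s * a (n + 2) + s * a (n + 1) - a n = 0 := by
  have h1 := a_rec n
  have h2 := sa (n + 2)
  have h3 := sa (n + 1)
  push_cast at *
  linear_combination h1 - h2 + h3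

lemma a0 : a 0 = 1 := by simp [a, MonoidAlgebra.one_def]

lemma a1 : a 1 = s + w := by
  have := a_eq 1
  have hb : b 1 = 1 + w := by
    rw [b]; simp [Finset.sum_range_succ]
  rw [this, hb, s]; ring

lemma a2 : a 2 = 3 * s := by
  have := a_eq 2
  have hb : b 2 = s := by
    rw [b, s]; rw [Finset.sum_range_succ, Finset.sum_range_succ, Finset.sum_range_one]; ring
  rw [this, hb, sq, ss]

end EhrhartAux

open EhrhartAux PowerSeries in
theorem phi_Ehrhart_series_unit_square_C3 :
    (1 - PowerSeries.X) *
      (1 - PowerSeries.C (R := MonoidAlgebra ℤ (Multiplicative (ZMod 3)))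
        (MonoidAlgebra.of ℤ (Multiplicative (ZMod 3)) ω) * PowerSeries.X) *
      (1 - PowerSeries.C (R := MonoidAlgebra ℤ (Multiplicative (ZMod 3)))
        (MonoidAlgebra.of ℤ (Multiplicative (ZMod 3)) (ω ^ 2)) * PowerSeries.X) *
      PowerSeries.mk (fun n =>
        ∑ i ∈ Finset.range (n + 1), ∑ j ∈ Finset.range (n + 1),
          MonoidAlgebra.of ℤ (Multiplicative (ZMod 3)) (ω ^ (i + j)))
    = 1 + PowerSeries.C (R := MonoidAlgebra ℤ (Multiplicative (ZMod 3)))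
        (MonoidAlgebra.of ℤ (Multiplicative (ZMod 3)) ω) * PowerSeries.X := by
  have hof : MonoidAlgebra.of ℤ (Multiplicative (ZMod 3)) (ω ^ 2) = w ^ 2 := by
    rw [map_pow]; rfl
  have hmk : PowerSeries.mk (fun n =>
        ∑ i ∈ Finset.range (n + 1), ∑ j ∈ Finset.range (n + 1),
          MonoidAlgebra.of ℤ (Multiplicative (ZMod 3)) (ω ^ (i + j)))
      = PowerSeries.mk a := rfl
  rw [hof, hmk]
  show (1 - X) * (1 - C (R := A) w * X) * (1 - C (R := A) (w ^ 2) * X) * mk a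
      = 1 + C (R := A) w * X
  have hP : (1 - X) * (1 - C (R := A) w * X) * (1 - C (R := A) (w ^ 2) * X)
      = 1 - C (R := A) s * X + C (R := A) s * X ^ 2 - X ^ 3 := by
    have hu : (C (R := A) w) ^ 3 = 1 := by rw [← map_pow, w3, map_one]
    rw [s, map_add, map_add, map_one, map_pow]
    linear_combination (X ^ 2 - X ^ 3 : A⟦X⟧) * hu
  rw [hP]
  refine PowerSeries.ext fun n => ?_
  rw [show (1 - C (R := A) s * X + C (R := A) s * X ^ 2 - X ^ 3) * mk a
      = mk a - C (R := A) s * (mk a * X ^ 1) + C (R := A) s * (mk a * X ^ 2) - mk a * X ^ 3 by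
    ring]
  simp only [map_sub, map_add, coeff_C_mul, coeff_mul_X_pow', coeff_mk,
    coeff_one, coeff_X]
  have hws : w * s = s := by have := wks 1; rwa [pow_one] at this
  match n with
  | 0 =>
    norm_num
    rw [a0]
  | 1 =>
    norm_num
    rw [a1, a0]; ring
  | 2 =>
    norm_num
    show a 2 - s * a 1 + s * a 0 = 0
    linear_combination a2 - s * a1 + s * a0 - ss - hws
  | (n + 3) =>
    norm_num
    show a (n+3) - s * a (n+2) + s * a (n+1) - a n = 0
    exact key n
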